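/- Assume a_{ii} = 2 for all i. Then for every 1 ≤ j ≤ n, (S_1∘S_2∘⋯∘S_n)(e_j + Σ_{ℓ<j} a_{ℓj} e_ℓ) = −(e_j + Σ_{ℓ>j} a_{ℓj} e_ℓ). Equivalently, in the weight lattice, ω_j + Σ_{ℓ<j} a_{ℓj} ω_ℓ = −c^{−1}(ω_j + Σ_{ℓ>j} a_{ℓj} ω_ℓ), where c = s_1⋯s_n is the Coxeter element. -/

import Mathlib

open Finset

/-- The simple reflection `s_i` acting on the weight lattice in the basis of
fundamental weights: `S_i(e_j) = e_j` for `j ≠ i`, `S_i(e_i) = e_i - Σ_ℓ a_{ℓi} e_ℓ`. -/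
def Smap {n : ℕ} (A : Matrix (Fin n) (Fin n) ℤ) (i : Fin n) (v : Fin n → ℤ) : Fin n → ℤ :=
  v - (v i) • (fun ℓ => A ℓ i)

/-- The Coxeter element `c = s_1 s_2 ⋯ s_n` acting on the weight lattice:
`S_1 ∘ S_2 ∘ ⋯ ∘ S_n`. -/
def coxS {n : ℕ} (A : Matrix (Fin n) (Fin n) ℤ) (v : Fin n → ℤ) : Fin n → ℤ :=
  (List.finRange n).foldr (fun j w => Smap A j w) v

lemma Smap_fix {n : ℕ} (A : Matrix (Fin n) (Fin n) ℤ) (i : Fin n) (v : Fin n → ℤ)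
    (h : v i = 0) : Smap A i v = v := by
  simp [Smap, h]

lemma foldr_fix {n : ℕ} (A : Matrix (Fin n) (Fin n) ℤ) (l : List (Fin n)) (v : Fin n → ℤ)
    (h : ∀ i ∈ l, v i = 0) : l.foldr (fun j w => Smap A j w) v = v := by
  induction l with
  | nil => rfl
  | cons a l ih =>
      simp only [List.foldr_cons, ih (fun i hi => h i (List.mem_cons_of_mem a hi))]
      exact Smap_fix A a v (h a List.mem_cons_self)

lemma mem_drop_finRange {n k : ℕ} {i : Fin n} (h : i ∈ (List.finRange n).drop k) :
    k ≤ (i : ℕ) := by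
  rw [List.mem_iff_getElem] at h
  obtain ⟨t, ht, rfl⟩ := h
  simp only [List.getElem_drop, List.getElem_finRange]
  simp

/-- If `a_{ii} = 2` for all `i`, then
`(S_1∘⋯∘S_n)(e_j + Σ_{ℓ<j} a_{ℓj} e_ℓ) = −(e_j + Σ_{ℓ>j} a_{ℓj} e_ℓ)`, i.e. in the
weight lattice `ω_j + Σ_{ℓ<j} a_{ℓj} ω_ℓ = −c^{−1}(ω_j + Σ_{ℓ>j} a_{ℓj} ω_ℓ)`. -/
theorem statement4 (n : ℕ) (hn : 1 ≤ n) (A : Matrix (Fin n) (Fin n) ℤ)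
    (hdiag : ∀ i, A i i = 2) (j : Fin n) :
    coxS A (Pi.single j (1 : ℤ) +
        ∑ ℓ ∈ Finset.univ.filter (fun ℓ => ℓ < j), A ℓ j • Pi.single ℓ (1 : ℤ))
      = -(Pi.single j (1 : ℤ) +
        ∑ ℓ ∈ Finset.univ.filter (fun ℓ => j < ℓ), A ℓ j • Pi.single ℓ (1 : ℤ)) := by
  set v : Fin n → ℤ := Pi.single j (1 : ℤ) +
      ∑ ℓ ∈ Finset.univ.filter (fun ℓ => ℓ < j), A ℓ j • Pi.single ℓ (1 : ℤ) with hv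
  set T : Fin n → ℤ := -(Pi.single j (1 : ℤ) +
      ∑ ℓ ∈ Finset.univ.filter (fun ℓ => j < ℓ), A ℓ j • Pi.single ℓ (1 : ℤ)) with hT
  have hvval : ∀ i : Fin n, v i = if i < j then A i j else if i = j then 1 else 0 := by
    intro i
    simp only [hv, Pi.add_apply, Finset.sum_apply, Pi.smul_apply, Pi.single_apply,
      smul_ite, smul_zero, smul_eq_mul, mul_one, Finset.sum_ite_eq',
      Finset.mem_filter, Finset.mem_univ, true_and]
    rcases lt_trichotomy i j with h | h | h
    · simp [h, Fin.ne_of_lt h]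
    · simp [h, lt_irrefl]
    · simp [h, (Fin.ne_of_gt h), not_lt_of_gt h]
  have hTval : ∀ i : Fin n, T i = if j < i then -(A i j) else if i = j then -1 else 0 := by
    intro i
    simp only [hT, Pi.neg_apply, Pi.add_apply, Finset.sum_apply, Pi.smul_apply,
      Pi.single_apply, smul_ite, smul_zero, smul_eq_mul, mul_one, Finset.sum_ite_eq',
      Finset.mem_filter, Finset.mem_univ, true_and]
    rcases lt_trichotomy i j with h | h | h
    · simp [h, Fin.ne_of_lt h, not_lt_of_gt h]
    · simp [h, lt_irrefl]
    · simp [h, Fin.ne_of_gt h]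
  have hstep : Smap A j v = T := by
    funext i
    have hvj : v j = 1 := by simp [hvval]
    simp only [Smap, Pi.sub_apply, Pi.smul_apply, hvj, smul_eq_mul, one_mul,
      hvval i, hTval i]
    rcases lt_trichotomy i j with h | h | h
    · simp [h, Fin.ne_of_lt h, not_lt_of_gt h]
    · subst h; simp [hdiag i]
    · simp [h, Fin.ne_of_gt h, not_lt_of_gt h]
  -- foldr over drop (j+1) fixes v
  have htail : ((List.finRange n).drop ((j : ℕ) + 1)).foldr (fun i w => Smap A i w) v = v := by
    apply foldr_fix
    intro i hi
    have := mem_drop_finRange hi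
    have : j < i := by omega
    simp [hvval, Fin.ne_of_gt this, not_lt_of_gt this]
  have hdropj : ((List.finRange n).drop (j : ℕ)).foldr (fun i w => Smap A i w) v = T := by
    have hlt : (j : ℕ) < (List.finRange n).length := by simp
    rw [List.drop_eq_getElem_cons hlt]
    simp only [List.getElem_finRange, List.foldr_cons, htail]
    simpa using hstep
  have hgen : ∀ d k : ℕ, k + d = (j : ℕ) →
      ((List.finRange n).drop k).foldr (fun i w => Smap A i w) v = T := by
    intro d
    induction d with
    | zero => intro k hk; simpa [← hk] using hdropj
    | succ d ih =>
        intro k hk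
        have hkn : k < (List.finRange n).length := by
          simp; omega
        rw [List.drop_eq_getElem_cons hkn]
        simp only [List.getElem_finRange, List.foldr_cons, ih (k+1) (by omega)]
        apply Smap_fix
        have hk' : (⟨k, by simpa using hkn⟩ : Fin n) < j := by
          simp [Fin.lt_def]; omega
        simp [hTval, Fin.ne_of_lt hk', not_lt_of_gt hk']
  have : coxS A v = T := by
    rcases Nat.lt_or_ge 0 (j : ℕ) with h | h
    · have := hgen (j : ℕ) 0 (by omega)
      simpa [coxS] using this
    · have hj0 : (j : ℕ) = 0 := by omega
      have := hdropj
      rw [hj0] at this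
      simpa [coxS] using this
  exact this
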